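/- The closed linear span in C₀(ℝ, ℂ) (complex-valued continuous functions on ℝ vanishing at infinity, with the supremum norm) of the family of functions {λ ↦ (λ − z)^{−1} : z ∈ ℂ \ ℝ} is all of C₀(ℝ, ℂ). Equivalently, the *-subalgebra of C₀(ℝ, ℂ) generated by these resolvent functions is dense in C₀(ℝ, ℂ), by the Stone–Weierstrass theorem for locally compact Hausdorff spaces. -/

import Mathlib

open scoped ZeroAtInfty
open Complex Filter Topology Metric

noncomputable section HermAux

lemma aux_ne (z : ℂ) (hz : z.im ≠ 0) (t : ℝ) : (t:ℂ) - z ≠ 0 := by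
  intro h
  apply hz
  have := congrArg Complex.im h
  simpa using this.symm

lemma res_tendsto (z : ℂ) : Tendsto (fun t : ℝ => ((t:ℂ) - z)⁻¹) (cocompact ℝ) (𝓝 0) := by
  rw [tendsto_zero_iff_norm_tendsto_zero]
  simp only [norm_inv]
  apply Tendsto.inv_tendsto_atTop
  apply tendsto_atTop_mono (fun t : ℝ => ?_)
    (tendsto_atTop_add_const_right (cocompact ℝ) (-‖z‖) tendsto_norm_cocompact_atTop)
  calc ‖t‖ + -‖z‖ = ‖(t:ℂ)‖ - ‖z‖ := by rw [Complex.norm_real]; ring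
    _ ≤ ‖(t:ℂ) - z‖ := norm_sub_norm_le _ _

noncomputable def res (z : ℂ) (hz : z.im ≠ 0) : C₀(ℝ, ℂ) where
  toFun t := ((t:ℂ) - z)⁻¹
  continuous_toFun := ((Complex.continuous_ofReal).sub continuous_const).inv₀ (aux_ne z hz)
  zero_at_infty' := res_tendsto z

@[simp] lemma res_apply (z : ℂ) (hz : z.im ≠ 0) (t : ℝ) : res z hz t = ((t:ℂ) - z)⁻¹ := rfl

lemma abs_im_le_norm_sub (w : ℂ) (t : ℝ) : |w.im| ≤ ‖(t:ℂ) - w‖ := by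
  have h := Complex.abs_im_le_norm ((t:ℂ) - w)
  simpa using h

lemma res_dist_le (z w : ℂ) (hz : z.im ≠ 0) (hw : w.im ≠ 0) :
    dist (res w hw) (res z hz) ≤ ‖w - z‖ / (|w.im| * |z.im|) := by
  rw [← ZeroAtInftyContinuousMap.dist_toBCF_eq_dist]
  refine (BoundedContinuousFunction.dist_le (by positivity)).mpr fun t => ?_
  have hwt := aux_ne w hw t
  have hzt := aux_ne z hz t
  rw [dist_eq_norm]
  have key : ((t:ℂ)-w)⁻¹ - ((t:ℂ)-z)⁻¹ = (w - z) * (((t:ℂ)-w)⁻¹ * ((t:ℂ)-z)⁻¹) := by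
    field_simp
    ring
  calc ‖((res w hw).toBCF t) - ((res z hz).toBCF t)‖
      = ‖w - z‖ * (‖(t:ℂ)-w‖⁻¹ * ‖(t:ℂ)-z‖⁻¹) := by
        show ‖((t:ℂ)-w)⁻¹ - ((t:ℂ)-z)⁻¹‖ = _
        rw [key, norm_mul, norm_mul, norm_inv, norm_inv]
    _ ≤ ‖w - z‖ * (|w.im|⁻¹ * |z.im|⁻¹) := by
        gcongr
        · exact abs_im_le_norm_sub w t
        · exact abs_im_le_norm_sub z t
    _ = ‖w - z‖ / (|w.im| * |z.im|) := by rw [div_eq_mul_inv, mul_inv]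

end HermAux

noncomputable def Sres : Set C₀(ℝ, ℂ) :=
  {f : C₀(ℝ, ℂ) | ∃ z : ℂ, z.im ≠ 0 ∧ ∀ t : ℝ, f t = ((t : ℂ) - z)⁻¹}

noncomputable def Mres : Submodule ℂ C₀(ℝ, ℂ) := (Submodule.span ℂ Sres).topologicalClosure

lemma res_mem_span (z : ℂ) (hz : z.im ≠ 0) : res z hz ∈ Submodule.span ℂ Sres :=
  Submodule.subset_span ⟨z, hz, fun _ => rfl⟩

lemma res_mem_M (z : ℂ) (hz : z.im ≠ 0) : res z hz ∈ Mres :=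
  Submodule.le_topologicalClosure _ (res_mem_span z hz)

lemma isClosed_M : IsClosed (Mres : Set C₀(ℝ, ℂ)) :=
  Submodule.isClosed_topologicalClosure _

lemma res_mul_res_mem_of_ne (z w : ℂ) (hz : z.im ≠ 0) (hw : w.im ≠ 0) (hzw : z ≠ w) :
    res z hz * res w hw ∈ Mres := by
  have key : res z hz * res w hw = (z - w)⁻¹ • (res z hz - res w hw) := by
    ext t
    have hzt := aux_ne z hz t
    have hwt := aux_ne w hw t
    have hzw' : z - w ≠ 0 := sub_ne_zero.mpr hzw
    simp only [ZeroAtInftyContinuousMap.coe_mul, ZeroAtInftyContinuousMap.coe_smul,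
      ZeroAtInftyContinuousMap.coe_sub, Pi.mul_apply, Pi.smul_apply, Pi.sub_apply, res_apply,
      smul_eq_mul]
    field_simp
    ring
  rw [key]
  exact Mres.smul_mem _ (Mres.sub_mem (res_mem_M z hz) (res_mem_M w hw))

lemma res_mul_res_mem (z w : ℂ) (hz : z.im ≠ 0) (hw : w.im ≠ 0) :
    res z hz * res w hw ∈ Mres := by
  rcases ne_or_eq z w with hzw | rfl
  · exact res_mul_res_mem_of_ne z w hz hw hzw
  -- z = w case : limit argument
  set wseq : ℕ → ℂ := fun n => z + (z.im / (n + 1)) * Complex.I with hwseq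
  have him : ∀ n : ℕ, (wseq n).im = z.im * (1 + 1/(n+1)) := by
    intro n
    have h2 : (↑z.im / (↑n + 1) * Complex.I : ℂ) = ((z.im / (n+1) : ℝ) : ℂ) * Complex.I := by
      push_cast; ring
    simp only [hwseq, Complex.add_im, h2, Complex.mul_I_im, Complex.ofReal_re]
    ring
  have him' : ∀ n : ℕ, (wseq n).im ≠ 0 := by
    intro n
    rw [him n]
    have : (0:ℝ) < 1 + 1/(n+1) := by positivity
    exact mul_ne_zero hz this.ne'
  have habs : ∀ n : ℕ, ‖wseq n - z‖ = |z.im| / (n + 1) := by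
    intro n
    have h2 : wseq n - z = ((z.im / (n+1) : ℝ) : ℂ) * Complex.I := by
      simp only [hwseq]; push_cast; ring
    rw [h2, norm_mul, Complex.norm_I, mul_one, Complex.norm_real, Real.norm_eq_abs,
      abs_div]
    congr 1
    rw [abs_of_pos (by positivity)]
  have hge : ∀ n : ℕ, |z.im| ≤ |(wseq n).im| := by
    intro n
    rw [him n, abs_mul, abs_of_pos (show (0:ℝ) < 1 + 1/(n+1) by positivity)]
    exact le_mul_of_one_le_right (abs_nonneg _) (le_add_of_nonneg_right (by positivity))
  have hdist : ∀ n : ℕ, dist (res (wseq n) (him' n)) (res z hw) ≤ |z.im|⁻¹ * (1 / (n+1)) := by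
    intro n
    refine (res_dist_le z (wseq n) hw (him' n)).trans ?_
    rw [habs n]
    have h0 : (0:ℝ) < |z.im| := abs_pos.mpr hz
    calc |z.im|/(n+1) / (|(wseq n).im| * |z.im|)
        ≤ |z.im|/(n+1) / (|z.im| * |z.im|) := by
          refine div_le_div_of_nonneg_left (by positivity) (by positivity) ?_
          exact mul_le_mul_of_nonneg_right (hge n) (abs_nonneg _)
      _ = |z.im|⁻¹ * (1/(n+1)) := by
          field_simp
  have htend : Tendsto (fun n : ℕ => res (wseq n) (him' n)) atTop (𝓝 (res z hw)) := by
    rw [tendsto_iff_dist_tendsto_zero]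
    refine squeeze_zero (fun n => dist_nonneg) hdist ?_
    have := tendsto_one_div_add_atTop_nhds_zero_nat (𝕜 := ℝ)
    simpa using this.const_mul |z.im|⁻¹
  have hmul : Tendsto (fun n : ℕ => res z hz * res (wseq n) (him' n)) atTop
      (𝓝 (res z hz * res z hw)) := tendsto_const_nhds.mul htend
  refine isClosed_M.mem_of_tendsto hmul (Filter.Eventually.of_forall fun n => ?_)
  have hne : z ≠ wseq n := by
    intro h
    have h3 : wseq n - z = ((z.im / (n+1) : ℝ) : ℂ) * Complex.I := by
      simp only [hwseq]; push_cast; ring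
    rw [← h, sub_self] at h3
    have h4 := congrArg Complex.im h3.symm
    simp only [Complex.mul_I_im, Complex.ofReal_re, Complex.zero_im] at h4
    rcases div_eq_zero_iff.mp h4 with h5 | h5
    · exact hz h5
    · have : (0:ℝ) < (n:ℝ) + 1 := by positivity
      exact this.ne' h5
  exact res_mul_res_mem_of_ne z (wseq n) hz (him' n) hne


lemma eq_res_of_mem_S {f : C₀(ℝ, ℂ)} (hf : f ∈ Sres) :
    ∃ (z : ℂ) (hz : z.im ≠ 0), f = res z hz := by
  obtain ⟨z, hz, hfz⟩ := hf
  exact ⟨z, hz, ZeroAtInftyContinuousMap.ext fun t => by rw [hfz t, res_apply]⟩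

lemma M_coe_eq : (Mres : Set C₀(ℝ, ℂ)) = closure (Submodule.span ℂ Sres : Set C₀(ℝ, ℂ)) :=
  Submodule.topologicalClosure_coe _

lemma res_mul_mem (z : ℂ) (hz : z.im ≠ 0) {h : C₀(ℝ, ℂ)} (hh : h ∈ Mres) :
    res z hz * h ∈ Mres := by
  have hspan : ∀ g ∈ Submodule.span ℂ Sres, res z hz * g ∈ Mres := by
    intro g hg
    induction hg using Submodule.span_induction with
    | mem f hf =>
      obtain ⟨w, hw, rfl⟩ := eq_res_of_mem_S hf
      exact res_mul_res_mem z w hz hw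
    | zero => rw [mul_zero]; exact Mres.zero_mem
    | add f g _ _ hf' hg' => rw [mul_add]; exact Mres.add_mem hf' hg'
    | smul c f _ hf' => rw [mul_smul_comm]; exact Mres.smul_mem c hf'
  have hcl : IsClosed {g : C₀(ℝ, ℂ) | res z hz * g ∈ Mres} :=
    IsClosed.preimage (continuous_const.mul continuous_id) isClosed_M
  have hsub : (Mres : Set C₀(ℝ, ℂ)) ⊆ {g | res z hz * g ∈ Mres} := by
    rw [M_coe_eq]
    exact closure_minimal hspan hcl
  exact hsub hh

lemma mul_mem_M {f h : C₀(ℝ, ℂ)} (hf : f ∈ Mres) (hh : h ∈ Mres) : f * h ∈ Mres := by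
  have hspan : ∀ g ∈ Submodule.span ℂ Sres, g * h ∈ Mres := by
    intro g hg
    induction hg using Submodule.span_induction with
    | mem f hf' =>
      obtain ⟨w, hw, rfl⟩ := eq_res_of_mem_S hf'
      exact res_mul_mem w hw hh
    | zero => rw [zero_mul]; exact Mres.zero_mem
    | add f g _ _ hf' hg' => rw [add_mul]; exact Mres.add_mem hf' hg'
    | smul c f _ hf' => rw [smul_mul_assoc]; exact Mres.smul_mem c hf'
  have hcl : IsClosed {g : C₀(ℝ, ℂ) | g * h ∈ Mres} :=
    IsClosed.preimage (continuous_id.mul continuous_const) isClosed_M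
  have hsub : (Mres : Set C₀(ℝ, ℂ)) ⊆ {g | g * h ∈ Mres} := by
    rw [M_coe_eq]
    exact closure_minimal hspan hcl
  exact hsub hf

open scoped ContinuousMapZero

noncomputable def sph : Set ℂ := Metric.sphere (Complex.I/2 : ℂ) (1/2)

lemma mem_sph_iff (w : ℂ) : w ∈ sph ↔ Complex.normSq w = w.im := by
  have hns : Complex.normSq (w - Complex.I/2) = Complex.normSq w - w.im + 1/4 := by
    simp [Complex.normSq_apply, Complex.sub_re, Complex.sub_im, Complex.div_ofNat_re,
      Complex.div_ofNat_im, Complex.I_re, Complex.I_im]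
    ring
  rw [sph, mem_sphere_iff_norm, Complex.norm_def]
  constructor
  · intro h
    have h2 : Complex.normSq (w - Complex.I/2) = 1/4 := by
      have := congrArg (fun x : ℝ => x^2) h
      simp only [Real.sq_sqrt (Complex.normSq_nonneg _)] at this
      rw [this]; norm_num
    rw [hns] at h2
    linarith
  · intro h
    rw [hns, h]
    rw [show w.im - w.im + 1/4 = (1/2:ℝ)^2 by ring, Real.sqrt_sq (by norm_num)]

lemma zero_mem_sph : (0:ℂ) ∈ sph := by rw [mem_sph_iff]; simp

noncomputable instance : Zero sph := ⟨⟨0, zero_mem_sph⟩⟩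

lemma h0sph : ((0 : sph) : ℂ) = 0 := rfl

instance : Fact ((0:ℂ) ∈ sph) := ⟨zero_mem_sph⟩

instance : CompactSpace sph := isCompact_iff_compactSpace.mp (isCompact_sphere _ _)

lemma gmap_mem (t : ℝ) : ((t:ℂ) - Complex.I)⁻¹ ∈ sph := by
  rw [mem_sph_iff, map_inv₀ Complex.normSq, Complex.inv_im]
  have him : ((t:ℂ) - Complex.I).im = -1 := by simp
  rw [him]
  norm_num

noncomputable def gmap (t : ℝ) : sph := ⟨((t:ℂ) - Complex.I)⁻¹, gmap_mem t⟩

lemma gmap_coe (t : ℝ) : (gmap t : ℂ) = ((t:ℂ) - Complex.I)⁻¹ := rfl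

lemma gmap_cont : Continuous gmap := by
  apply Continuous.subtype_mk
  exact (Complex.continuous_ofReal.sub continuous_const).inv₀
    (aux_ne Complex.I (by simp) )

lemma gmap_ne_zero (t : ℝ) : (gmap t : ℂ) ≠ 0 :=
  inv_ne_zero (aux_ne Complex.I (by simp) t)

lemma gmap_tendsto : Filter.Tendsto gmap (Filter.cocompact ℝ) (𝓝 (0 : sph)) := by
  rw [tendsto_subtype_rng]
  exact res_tendsto Complex.I

-- For w ∈ sph, w ≠ 0 : im of w⁻¹ is -1
lemma inv_im_eq_neg_one {w : ℂ} (hw : w ∈ sph) (hw0 : w ≠ 0) : (w⁻¹).im = -1 := by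
  have h1 : Complex.normSq w = w.im := (mem_sph_iff w).mp hw
  have h2 : Complex.normSq w ≠ 0 := by
    simpa using Complex.normSq_pos.mpr hw0 |>.ne'
  rw [Complex.inv_im, h1]
  rw [h1] at h2
  field_simp

variable (f : C₀(ℝ, ℂ))

noncomputable def Ff (f : C₀(ℝ, ℂ)) : sph → ℂ :=
  fun w => if (w:ℂ) = 0 then 0 else f (((w:ℂ)⁻¹).re)

lemma Ff_gmap (t : ℝ) : Ff f (gmap t) = f t := by
  rw [Ff, if_neg (gmap_ne_zero t)]
  congr 1
  rw [gmap_coe, inv_inv]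
  simp

lemma Ff_zero : Ff f 0 = 0 := by rw [Ff, if_pos h0sph]

lemma Ff_cont : Continuous (Ff f) := by
  rw [continuous_iff_continuousAt]
  intro w₀
  by_cases h : (w₀ : ℂ) = 0
  · -- continuity at 0
    have hw0 : w₀ = 0 := Subtype.ext (h.trans h0sph.symm)
    subst hw0
    rw [ContinuousAt, Ff_zero]
    rw [← nhdsNE_sup_pure, Filter.tendsto_sup]
    constructor
    · -- on 𝓝[≠] 0
      have hne : ∀ᶠ w in 𝓝[≠] (0:sph), (w.val) ≠ 0 := by
        filter_upwards [self_mem_nhdsWithin] with w hw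
        exact fun hc => hw (Subtype.ext (hc.trans h0sph.symm))
      have key : Filter.Tendsto (fun w : sph => ((w:ℂ)⁻¹).re) (𝓝[≠] (0:sph))
          (Filter.cocompact ℝ) := by
        rw [cocompact_eq_atBot_atTop, ← comap_abs_atTop, Filter.tendsto_comap_iff]
        -- |Re w⁻¹| → atTop
        have hnorm : Filter.Tendsto (fun w : sph => ‖(w:ℂ)‖) (𝓝[≠] (0:sph)) (𝓝[>] 0) := by
          apply tendsto_nhdsWithin_of_tendsto_nhds_of_eventually_within
          · have : Filter.Tendsto (fun w : sph => ‖(w:ℂ)‖) (𝓝 (0:sph)) (𝓝 ‖((0:sph):ℂ)‖) :=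
              (continuous_subtype_val.norm).tendsto _
            rw [h0sph, norm_zero] at this
            exact this.mono_left nhdsWithin_le_nhds
          · filter_upwards [hne] with w hw
            exact norm_pos_iff.mpr hw
        have hinv : Filter.Tendsto (fun w : sph => ‖(w:ℂ)‖⁻¹) (𝓝[≠] (0:sph)) Filter.atTop :=
          tendsto_inv_nhdsGT_zero.comp hnorm
        apply Filter.tendsto_atTop_mono' _ _
          (Filter.tendsto_atTop_add_const_right _ (-1) hinv)
        filter_upwards [hne, self_mem_nhdsWithin] with w hw hw'
        have hmem : (w:ℂ) ∈ sph := w.2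
        have him : ((w:ℂ)⁻¹).im = -1 := inv_im_eq_neg_one hmem hw
        have habs := Complex.norm_le_abs_re_add_abs_im ((w:ℂ)⁻¹)
        have h1 : ‖(w:ℂ)⁻¹‖ ≤ |((w:ℂ)⁻¹).re| + 1 := by
          simpa [him] using habs
        rw [norm_inv] at h1
        simp only [Function.comp_apply]
        linarith
      have := (zero_at_infty f).comp key
      refine this.congr' ?_
      filter_upwards [hne] with w hw
      simp [Ff, if_neg hw, Function.comp]
    · -- pure
      have : Ff f 0 = 0 := Ff_zero f
      rw [Filter.tendsto_pure_left]
      intro s hs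
      rw [this] at *
      exact mem_of_mem_nhds hs
  · -- continuity away from 0
    have hU : IsOpen {w : sph | (w:ℂ) ≠ 0} :=
      (isOpen_compl_singleton).preimage continuous_subtype_val
    have hc : ContinuousAt (fun w : sph => f (((w:ℂ)⁻¹).re)) w₀ := by
      apply (map_continuous f).continuousAt.comp
      apply Complex.continuous_re.continuousAt.comp
      exact (continuous_subtype_val.continuousAt).inv₀ h
    refine hc.congr ?_
    filter_upwards [hU.mem_nhds h] with w hw
    rw [Ff, if_neg hw]

noncomputable def Fof (f : C₀(ℝ, ℂ)) : C(sph, ℂ)₀ :=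
  ⟨⟨Ff f, Ff_cont f⟩, Ff_zero f⟩

lemma Fof_apply (w : sph) : Fof f w = Ff f w := rfl

noncomputable def Phi (p : C(sph, ℂ)₀) : C₀(ℝ, ℂ) where
  toFun t := p (gmap t)
  continuous_toFun := (map_continuous p).comp gmap_cont
  zero_at_infty' := by
    have h := ((map_continuous p).tendsto (0 : sph)).comp gmap_tendsto
    rwa [map_zero p] at h

lemma Phi_apply (p : C(sph, ℂ)₀) (t : ℝ) : Phi p t = p (gmap t) := rfl

lemma dist_Phi (p q : C(sph, ℂ)₀) : dist (Phi p) (Phi q) ≤ dist p q := by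
  rw [← ZeroAtInftyContinuousMap.dist_toBCF_eq_dist]
  refine (BoundedContinuousFunction.dist_le dist_nonneg).mpr fun t => ?_
  have h1 : dist p q = dist (p : C(sph, ℂ)) (q : C(sph, ℂ)) := rfl
  rw [h1]
  exact ContinuousMap.dist_apply_le_dist (gmap t)

lemma Phi_mem (p : C(sph, ℂ)₀) : Phi p ∈ Mres := by
  induction p using ContinuousMapZero.induction_on with
  | zero =>
    have : Phi 0 = 0 := by ext t; simp [Phi_apply]
    rw [this]; exact Mres.zero_mem
  | id =>
    have : Phi (ContinuousMapZero.id sph) = res Complex.I (by simp) := by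
      ext t; rfl
    rw [this]; exact res_mem_M _ _
  | star_id =>
    have : Phi (star (ContinuousMapZero.id sph)) = res (-Complex.I) (by simp) := by
      ext t
      show star ((gmap t : ℂ)) = ((t:ℂ) - (-Complex.I))⁻¹
      rw [gmap_coe, sub_neg_eq_add]
      rw [show star ((((t:ℂ) - Complex.I))⁻¹) = (starRingEnd ℂ) (((t:ℂ) - Complex.I)⁻¹) from rfl,
        map_inv₀, map_sub, Complex.conj_ofReal, Complex.conj_I, sub_neg_eq_add]
    rw [this]; exact res_mem_M _ _
  | add p q hp hq =>
    have : Phi (p + q) = Phi p + Phi q := by ext t; simp [Phi_apply]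
    rw [this]; exact Mres.add_mem hp hq
  | mul p q hp hq =>
    have : Phi (p * q) = Phi p * Phi q := by ext t; simp [Phi_apply]
    rw [this]; exact mul_mem_M hp hq
  | smul c p hp =>
    have : Phi (c • p) = c • Phi p := by ext t; simp [Phi_apply]
    rw [this]; exact Mres.smul_mem c hp
  | closure hadj q =>
    rw [← SetLike.mem_coe, ← isClosed_M.closure_eq]
    refine Metric.mem_closure_iff.mpr fun ε hε => ?_
    have hq : q ∈ closure (NonUnitalStarAlgebra.adjoin ℂ
        {(ContinuousMapZero.id sph : C(sph, ℂ)₀)} : Set C(sph, ℂ)₀) :=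
      (ContinuousMapZero.adjoin_id_dense sph).closure_eq ▸ Set.mem_univ q
    obtain ⟨p', hp', hd⟩ := Metric.mem_closure_iff.mp hq ε hε
    exact ⟨Phi p', hadj p' hp', lt_of_le_of_lt (dist_Phi q p') hd⟩

theorem hermitianDMD_stmt10 :
    Dense (↑(Submodule.span ℂ
        {f : C₀(ℝ, ℂ) | ∃ z : ℂ, z.im ≠ 0 ∧ ∀ t : ℝ, f t = ((t : ℂ) - z)⁻¹}) :
      Set C₀(ℝ, ℂ)) := by
  rw [dense_iff_closure_eq]
  apply Set.eq_univ_of_forall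
  intro f
  have h1 : f = Phi (Fof f) := by
    ext t
    rw [Phi_apply, Fof_apply, Ff_gmap]
  have h2 : f ∈ Mres := h1 ▸ Phi_mem (Fof f)
  have h3 := M_coe_eq
  rw [Mres, Sres] at h3
  rw [← h3]
  exact h2
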